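/- Let α > 0 be a non-integer real number, let m = ⌈α⌉, let n ∈ ℕ, and let a < x be real numbers. Then the left-sided Riemann–Liouville fractional derivative of order α of the power function τ ↦ τ^n satisfies: the m-th iterated derivative at x of y ↦ (1/Γ(m-α)) ∫_a^y (y - τ)^(m-α-1) τ^n dτ equals n! · (x - a)^(-α) · Σ_{k=0}^{n} a^(n-k) (x - a)^k / ((n - k)! · Γ(k - α + 1)). -/

import Mathlib

open MeasureTheory Real

open scoped Topology

private lemma real_scaled_beta (k : ℕ) {b s : ℝ} (hb : 0 < b) (hs : 0 < s) :
    ∫ u in (0:ℝ)..s, u ^ k * (s - u) ^ (b - 1) =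
      s ^ (b + k) * ((k.factorial : ℝ) * Real.Gamma b / Real.Gamma (b + k + 1)) := by
  have key := Complex.betaIntegral_scaled ((k : ℂ) + 1) (b : ℂ) hs
  have h1 : (∫ u in (0:ℝ)..s, ((u:ℂ)) ^ ((k : ℂ) + 1 - 1) * ((s:ℂ) - u) ^ ((b:ℂ) - 1))
      = ((∫ u in (0:ℝ)..s, u ^ k * (s - u) ^ (b - 1) : ℝ) : ℂ) := by
    have hcg : (∫ u in (0:ℝ)..s, ((u:ℂ)) ^ ((k : ℂ) + 1 - 1) * ((s:ℂ) - u) ^ ((b:ℂ) - 1))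
        = ∫ u in (0:ℝ)..s, ((u ^ k * (s - u) ^ (b - 1) : ℝ) : ℂ) := by
      apply intervalIntegral.integral_congr
      intro u hu
      rw [Set.uIcc_of_le hs.le] at hu
      have h2 : ((k : ℂ) + 1 - 1) = ((k : ℕ) : ℂ) := by ring
      simp only
      rw [h2, Complex.cpow_natCast,
        show ((s:ℂ) - u) = ((s - u : ℝ) : ℂ) by push_cast; ring,
        show ((b:ℂ) - 1) = ((b - 1 : ℝ) : ℂ) by push_cast; ring,
        ← Complex.ofReal_cpow (by linarith [hu.2] : (0:ℝ) ≤ s - u)]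
      push_cast
      ring
    rw [hcg]
    exact RCLike.intervalIntegral_ofReal
  have hΓne : Complex.Gamma ((k : ℂ) + 1 + b) ≠ 0 := by
    apply Complex.Gamma_ne_zero
    intro j hj
    have := congrArg Complex.re hj
    simp [Complex.add_re] at this
    nlinarith [Nat.cast_nonneg (α := ℝ) k, Nat.cast_nonneg (α := ℝ) j]
  have hbeta := Complex.Gamma_mul_Gamma_eq_betaIntegral
    (s := (k : ℂ) + 1) (t := (b : ℂ)) (by simp; positivity) (by simpa using hb)
  have hbeta' : Complex.betaIntegral ((k : ℂ) + 1) (b : ℂ) =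
      Complex.Gamma ((k : ℂ) + 1) * Complex.Gamma (b : ℂ) / Complex.Gamma ((k : ℂ) + 1 + b) := by
    field_simp
    linear_combination -hbeta
  rw [h1, hbeta'] at key
  have hg1 : Complex.Gamma ((k : ℂ) + 1) = (k.factorial : ℂ) := by
    exact_mod_cast Complex.Gamma_nat_eq_factorial k
  have hg2 : Complex.Gamma ((b : ℂ)) = (Real.Gamma b : ℂ) := Complex.Gamma_ofReal b
  have hg3 : Complex.Gamma ((k : ℂ) + 1 + b) = (Real.Gamma (b + k + 1) : ℂ) := by
    rw [show (k : ℂ) + 1 + b = ((b + k + 1 : ℝ) : ℂ) by push_cast; ring]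
    exact Complex.Gamma_ofReal _
  have hg4 : ((s:ℂ)) ^ ((k : ℂ) + 1 + b - 1) = ((s ^ (b + k) : ℝ) : ℂ) := by
    rw [show (k : ℂ) + 1 + b - 1 = ((b + k : ℝ) : ℂ) by push_cast; ring]
    rw [Complex.ofReal_cpow hs.le]
  rw [hg1, hg2, hg3, hg4] at key
  exact_mod_cast key

private lemma kernel_integral (k : ℕ) {b a y : ℝ} (hb : 0 < b) (hay : a < y) :
    ∫ τ in a..y, (y - τ) ^ (b - 1) * (τ - a) ^ k =
      (y - a) ^ (b + k) * ((k.factorial : ℝ) * Real.Gamma b / Real.Gamma (b + k + 1)) := by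
  have h := intervalIntegral.integral_comp_sub_right
      (fun u => u ^ k * ((y - a) - u) ^ (b - 1)) a (a := a) (b := y)
  rw [sub_self] at h
  calc ∫ τ in a..y, (y - τ) ^ (b - 1) * (τ - a) ^ k
      = ∫ τ in a..y, (fun u => u ^ k * ((y - a) - u) ^ (b - 1)) (τ - a) := by
        apply intervalIntegral.integral_congr
        intro τ _
        simp only
        rw [show (y - a) - (τ - a) = y - τ by ring]
        ring
    _ = ∫ u in (0:ℝ)..(y - a), u ^ k * ((y - a) - u) ^ (b - 1) := h
    _ = _ := real_scaled_beta k hb (by linarith)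

private lemma kernel_integrable (k : ℕ) {b : ℝ} (hb : 0 < b) (a y : ℝ) :
    IntervalIntegrable (fun τ => (y - τ) ^ (b - 1) * (τ - a) ^ k) volume a y := by
  have h1 : IntervalIntegrable (fun τ : ℝ => (y - τ) ^ (b - 1)) volume a y := by
    have h0 := (intervalIntegral.intervalIntegrable_rpow' (a := 0) (b := y - a)
      (r := b - 1) (by linarith)).comp_sub_left y
    simpa using h0.symm
  exact h1.mul_continuousOn (by fun_prop)

private lemma Gamma_prod (z : ℝ) : ∀ m : ℕ, (∀ i : ℕ, i < m → z - i ≠ 0) →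
    Real.Gamma (z + 1) = (∏ i ∈ Finset.range m, (z - i)) * Real.Gamma (z + 1 - m)
  | 0, _ => by simp
  | (m + 1), h => by
    rw [Gamma_prod z m (fun i hi => h i (by omega)), Finset.prod_range_succ]
    have hz : z - m ≠ 0 := h m (by omega)
    have h2 : Real.Gamma (z + 1 - m) = (z - m) * Real.Gamma (z - m) := by
      rw [show z + 1 - (m:ℝ) = (z - m) + 1 by ring, Real.Gamma_add_one hz]
    rw [h2, show z + 1 - ((m + 1 : ℕ) : ℝ) = z - m by push_cast; ring]
    ring

private lemma iter_deriv_sum (a : ℝ) (N : ℕ) (c : ℕ → ℝ) (p : ℕ → ℝ) :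
    ∀ (j : ℕ) (y : ℝ), a < y →
      iteratedDeriv j (fun y => ∑ k ∈ Finset.range N, c k * (y - a) ^ p k) y =
      ∑ k ∈ Finset.range N, c k * (∏ i ∈ Finset.range j, (p k - i)) * (y - a) ^ (p k - j)
  | 0, y, hy => by simp
  | (j + 1), y, hy => by
    rw [iteratedDeriv_succ]
    have hev : iteratedDeriv j (fun y => ∑ k ∈ Finset.range N, c k * (y - a) ^ p k)
        =ᶠ[nhds y] fun z => ∑ k ∈ Finset.range N,
          c k * (∏ i ∈ Finset.range j, (p k - i)) * (z - a) ^ (p k - j) := by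
      filter_upwards [Ioi_mem_nhds hy] with z hz
      exact iter_deriv_sum a N c p j z hz
    rw [hev.deriv_eq]
    have hd : HasDerivAt (fun z => ∑ k ∈ Finset.range N,
          c k * (∏ i ∈ Finset.range j, (p k - i)) * (z - a) ^ (p k - j))
        (∑ k ∈ Finset.range N,
          c k * (∏ i ∈ Finset.range (j + 1), (p k - i)) * (y - a) ^ (p k - ((j:ℝ) + 1))) y := by
      apply HasDerivAt.fun_sum
      intro k hk
      have h0 : y - a ≠ 0 := by
        have : (0:ℝ) < y - a := by linarith
        exact this.ne'
      have hbase : HasDerivAt (fun z : ℝ => (z - a) ^ (p k - j))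
          ((p k - j) * (y - a) ^ (p k - j - 1)) y := by
        have hb := ((hasDerivAt_id y).sub_const a).rpow_const
          (p := p k - j) (Or.inl h0)
        simpa using hb
      have hc := hbase.const_mul (c k * (∏ i ∈ Finset.range j, (p k - i)))
      refine hc.congr_deriv ?_
      rw [Finset.prod_range_succ, show p k - ((j:ℝ) + 1) = p k - j - 1 by ring]
      ring
    rw [hd.deriv]
    apply Finset.sum_congr rfl
    intro k hk
    rw [show p k - (((j:ℕ) + 1 : ℕ) : ℝ) = p k - ((j:ℝ) + 1) by push_cast; ring]

theorem rl_derivative_monomial (α : ℝ) (hα : 0 < α) (hαni : ∀ j : ℤ, α ≠ j)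
    (m : ℕ) (hm : m = ⌈α⌉₊) (n : ℕ) (a x : ℝ) (hax : a < x) :
    iteratedDeriv m
      (fun y => (1 / Real.Gamma ((m : ℝ) - α)) *
        ∫ τ in a..y, (y - τ) ^ ((m : ℝ) - α - 1) * τ ^ n) x =
      (n.factorial : ℝ) * (x - a) ^ (-α) *
        ∑ k ∈ Finset.range (n + 1),
          a ^ (n - k) * (x - a) ^ k / ((n - k).factorial * Real.Gamma ((k : ℝ) - α + 1)) := by
  set b : ℝ := (m : ℝ) - α with hb_def
  have hb : 0 < b := by
    rw [hb_def, hm]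
    have h1 : α ≤ (⌈α⌉₊ : ℝ) := Nat.le_ceil α
    have h2 : α ≠ (⌈α⌉₊ : ℝ) := fun h => hαni (⌈α⌉₊ : ℤ) (by exact_mod_cast h)
    have := lt_of_le_of_ne h1 h2
    linarith
  have hΓb : Real.Gamma b ≠ 0 := by
    apply Real.Gamma_ne_zero
    intro j hj
    exact hαni ((m : ℤ) + j) (by push_cast; rw [hb_def] at hj; linarith)
  set c : ℕ → ℝ := fun k =>
    (n.choose k : ℝ) * a ^ (n - k) * (k.factorial : ℝ) / Real.Gamma (b + k + 1) with hc_def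
  set p : ℕ → ℝ := fun k => b + k with hp_def
  have hFG : (fun y => (1 / Real.Gamma b) * ∫ τ in a..y, (y - τ) ^ (b - 1) * τ ^ n)
      =ᶠ[nhds x] fun y => ∑ k ∈ Finset.range (n + 1), c k * (y - a) ^ p k := by
    filter_upwards [Ioi_mem_nhds hax] with y hy
    have hay : a < y := hy
    have hint : ∀ τ : ℝ, (y - τ) ^ (b - 1) * τ ^ n = ∑ k ∈ Finset.range (n + 1),
        (n.choose k : ℝ) * a ^ (n - k) * ((y - τ) ^ (b - 1) * (τ - a) ^ k) := by
      intro τ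
      have h := add_pow (τ - a) a n
      rw [sub_add_cancel] at h
      rw [h, Finset.mul_sum]
      apply Finset.sum_congr rfl
      intro k hk
      ring
    rw [intervalIntegral.integral_congr (fun τ _ => hint τ),
      intervalIntegral.integral_finset_sum (fun k hk =>
        ((kernel_integrable k hb a y).const_mul _)), Finset.mul_sum]
    apply Finset.sum_congr rfl
    intro k hk
    rw [intervalIntegral.integral_const_mul, kernel_integral k hb hay]
    simp only [hc_def, hp_def]
    field_simp
  rw [hFG.iteratedDeriv_eq m, iter_deriv_sum a (n + 1) c p m x hax, Finset.mul_sum]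
  apply Finset.sum_congr rfl
  intro k hk
  have hkn : k ≤ n := Nat.lt_succ_iff.mp (Finset.mem_range.mp hk)
  have hxa : (0:ℝ) < x - a := by linarith
  have hΓprod : Real.Gamma (b + k + 1) =
      (∏ i ∈ Finset.range m, (b + k - i)) * Real.Gamma ((k : ℝ) - α + 1) := by
    have h := Gamma_prod (b + k) m (fun i hi => by
      intro h0
      exact hαni ((m : ℤ) + k - i) (by push_cast; rw [hb_def] at h0; linarith))
    rw [show b + (k:ℝ) + 1 - m = (k:ℝ) - α + 1 by rw [hb_def]; ring] at h
    exact h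
  have hΓk : Real.Gamma ((k : ℝ) - α + 1) ≠ 0 := by
    apply Real.Gamma_ne_zero
    intro j hj
    exact hαni ((k : ℤ) + 1 + j) (by push_cast; linarith)
  have hΓbk : Real.Gamma (b + k + 1) ≠ 0 := by
    have : (0:ℝ) < b + k + 1 := by positivity
    exact (Real.Gamma_pos_of_pos this).ne'
  have hP : (∏ i ∈ Finset.range m, (b + k - i)) ≠ 0 := by
    intro h0
    rw [hΓprod, h0, zero_mul] at hΓbk
    exact hΓbk rfl
  have hexp : (x - a) ^ (p k - m) = (x - a) ^ (-α) * (x - a) ^ (k : ℕ) := by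
    rw [show p k - (m:ℝ) = -α + (k:ℕ) by simp only [hp_def, hb_def]; push_cast; ring,
      Real.rpow_add hxa, Real.rpow_natCast]
  have hchoose : (n.choose k : ℝ) * (k.factorial : ℝ) * ((n - k).factorial : ℝ)
      = (n.factorial : ℝ) := by
    exact_mod_cast congrArg (Nat.cast (R := ℝ)) (Nat.choose_mul_factorial_mul_factorial hkn)
  have hprod_eq : ∏ i ∈ Finset.range m, (p k - i) = ∏ i ∈ Finset.range m, (b + k - i) := by
    apply Finset.prod_congr rfl
    intro i _
    simp [hp_def]
  rw [hprod_eq, hexp]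
  simp only [hc_def]
  rw [hΓprod]
  have hfac : ((n - k).factorial : ℝ) ≠ 0 := by positivity
  field_simp
  linear_combination a ^ (n - k) * hchoose
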